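/- Let V and W be real inner product spaces, let D : V → W be a linear map, and let φ_1, …, φ_r be an orthonormal family in V. Let S be the r×r real matrix with entries S_{ij} = ⟨D φ_j, D φ_i⟩_W (so S is symmetric positive semidefinite). Then for every u in the linear span of {φ_1, …, φ_r}, ‖D u‖_W ≤ sqrt(‖S‖₂) · ‖u‖_V, where ‖S‖₂ denotes the operator norm of S induced by the Euclidean norm on ℝ^r. -/

import Mathlib

open scoped RealInnerProductSpace

/-- **POD inverse estimate.**
Let `V`, `W` be real inner product spaces, `D : V → W` linear, and `φ 0, …, φ (r-1)` an
orthonormal family in `V`.  Let `S` be the `r × r` matrix with `S i j = ⟪D (φ j), D (φ i)⟫`.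
Then for every `u` in the span of the `φ j`,
`‖D u‖ ≤ sqrt(‖S‖₂) * ‖u‖`, where `‖S‖₂` is the operator norm of `S` induced by the
Euclidean norm on `ℝ^r`. -/
theorem pod_inverse_estimate
    {V W : Type*} [NormedAddCommGroup V] [InnerProductSpace ℝ V]
    [NormedAddCommGroup W] [InnerProductSpace ℝ W]
    (r : ℕ) (D : V →ₗ[ℝ] W) (φ : Fin r → V) (hφ : Orthonormal ℝ φ)
    (S : Matrix (Fin r) (Fin r) ℝ)
    (hS : ∀ i j, S i j = ⟪D (φ j), D (φ i)⟫)
    (u : V) (hu : u ∈ Submodule.span ℝ (Set.range φ)) :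
    ‖D u‖ ≤ Real.sqrt ‖Matrix.toEuclideanCLM (𝕜 := ℝ) S‖ * ‖u‖ := by
  obtain ⟨c, rfl⟩ := (Submodule.mem_span_range_iff_exists_fun ℝ).mp hu
  set A := Matrix.toEuclideanCLM (𝕜 := ℝ) S with hA
  set x : EuclideanSpace ℝ (Fin r) := (WithLp.equiv 2 _).symm c with hx
  have hxu : ‖x‖ = ‖∑ i, c i • φ i‖ := by
    rw [← Real.sqrt_sq (norm_nonneg x), ← Real.sqrt_sq (norm_nonneg (∑ i, c i • φ i))]
    congr 1
    rw [← real_inner_self_eq_norm_sq, ← real_inner_self_eq_norm_sq, inner_sum]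
    simp [x, real_inner_smul_right, hφ.inner_left_fintype, PiLp.inner_apply,
      WithLp.equiv_symm_apply, PiLp.toLp_apply, EuclideanSpace.norm_sq_eq, Real.norm_eq_abs, sq_abs, ← sq]
  have key : ‖D (∑ i, c i • φ i)‖ ^ 2 = ⟪x, A x⟫ := by
    have hAx : A x = (WithLp.equiv 2 _).symm (S.mulVec c) := by
      simp [hA, hx, Matrix.toLin'_apply]
    rw [← real_inner_self_eq_norm_sq, hAx]
    simp only [map_sum, map_smul]
    rw [sum_inner]
    simp only [real_inner_smul_left, inner_sum, real_inner_smul_right]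
    simp only [PiLp.inner_apply, RCLike.inner_apply, starRingEnd_apply, star_trivial,
      WithLp.equiv_symm_apply, PiLp.toLp_apply, Matrix.mulVec, dotProduct, hS, Finset.mul_sum, Finset.sum_mul, hx]
    rw [Finset.sum_comm]
    refine Finset.sum_congr rfl fun i _ => Finset.sum_congr rfl fun j _ => by ring
  have hAle : ⟪x, A x⟫ ≤ ‖A‖ * ‖x‖ ^ 2 := by
    calc ⟪x, A x⟫ ≤ ‖x‖ * ‖A x‖ := real_inner_le_norm x (A x)
      _ ≤ ‖x‖ * (‖A‖ * ‖x‖) := by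
          exact mul_le_mul_of_nonneg_left (A.le_opNorm x) (norm_nonneg x)
      _ = ‖A‖ * ‖x‖ ^ 2 := by ring
  have h2 : ‖D (∑ i, c i • φ i)‖ ^ 2 ≤ ‖A‖ * ‖∑ i, c i • φ i‖ ^ 2 := by
    rw [key, hxu] at *; exact hAle
  calc ‖D (∑ i, c i • φ i)‖ = Real.sqrt (‖D (∑ i, c i • φ i)‖ ^ 2) :=
        (Real.sqrt_sq (norm_nonneg _)).symm
    _ ≤ Real.sqrt (‖A‖ * ‖∑ i, c i • φ i‖ ^ 2) := Real.sqrt_le_sqrt h2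
    _ = Real.sqrt ‖A‖ * ‖∑ i, c i • φ i‖ := by
        rw [Real.sqrt_mul (norm_nonneg A), Real.sqrt_sq (norm_nonneg _)]
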